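/- Let H be a separable real Hilbert space, X ⊆ H a compact convex set, x₀ ∈ X, k ≥ 1 an integer, and P a Borel probability measure on H with P(X) = 1. Then there exists C* ∈ CC_{x₀,k}(X) attaining the minimum of K_X(C) = ∫ d(x, C)² dP(x) over all C ∈ CC_{x₀,k}(X); that is, the set of (k, x₀)-global principal convex components is nonempty. -/

import Mathlib

open MeasureTheory

noncomputable section

/-- `dim(C) ≤ k`: the smallest affine subspace containing `C` has dimension at most `k`. -/
def DimLE {H : Type*} [NormedAddCommGroup H] [InnerProductSpace ℝ H]
    (C : Set H) (k : ℕ) : Prop :=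
  Module.rank ℝ (affineSpan ℝ C).direction ≤ (k : Cardinal)

/-- `C ∈ CC_{x₀,k}(X)`: `C` is a nonempty closed convex subset of `X` containing `x₀`
with `dim(C) ≤ k`. -/
def MemCC {H : Type*} [NormedAddCommGroup H] [InnerProductSpace ℝ H]
    (X : Set H) (x₀ : H) (k : ℕ) (C : Set H) : Prop :=
  C.Nonempty ∧ IsClosed C ∧ C ⊆ X ∧ Convex ℝ C ∧ x₀ ∈ C ∧ DimLE C k

open Metric Set TopologicalSpace Filter Topology

section Helpers

variable {H : Type*} [NormedAddCommGroup H] [InnerProductSpace ℝ H]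

omit [InnerProductSpace ℝ H] in
lemma hausEdist_ne_top (C D : NonemptyCompacts H) :
    EMetric.hausdorffEdist (C : Set H) (D : Set H) ≠ ⊤ :=
  hausdorffEdist_ne_top_of_nonempty_of_bounded C.nonempty D.nonempty
    C.isCompact.isBounded D.isCompact.isBounded

omit [InnerProductSpace ℝ H] in
lemma exists_close_of_mem (C D : NonemptyCompacts H) {y : H} (hy : y ∈ (C : Set H)) :
    ∃ z ∈ (D : Set H), dist y z ≤ dist C D := by
  obtain ⟨z, hz, hdz⟩ := D.isCompact.exists_infDist_eq_dist D.nonempty y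
  refine ⟨z, hz, ?_⟩
  rw [← hdz, NonemptyCompacts.dist_eq]
  calc infDist y (D : Set H)
      ≤ infDist y (C : Set H) + hausdorffDist (C : Set H) (D : Set H) :=
        infDist_le_infDist_add_hausdorffDist (hausEdist_ne_top C D)
    _ = hausdorffDist (C : Set H) (D : Set H) := by
        rw [infDist_zero_of_mem hy, zero_add]

omit [InnerProductSpace ℝ H] in
lemma approx_seq {u : ℕ → NonemptyCompacts H} {C : NonemptyCompacts H}
    (hu : Tendsto u atTop (𝓝 C)) {y : H} (hy : y ∈ (C : Set H)) :
    ∃ v : ℕ → H, (∀ n, v n ∈ (u n : Set H)) ∧ Tendsto v atTop (𝓝 y) := by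
  choose v hv hdv using fun n => exists_close_of_mem C (u n) hy
  refine ⟨v, hv, ?_⟩
  rw [tendsto_iff_dist_tendsto_zero]
  have hd : Tendsto (fun n => dist C (u n)) atTop (𝓝 0) := by
    have := (tendsto_iff_dist_tendsto_zero.1 hu)
    simpa [dist_comm] using this
  exact squeeze_zero (fun n => dist_nonneg) (fun n => by simpa [dist_comm] using hdv n) hd

omit [InnerProductSpace ℝ H] in
lemma mem_of_tendsto_of_mem {u : ℕ → NonemptyCompacts H} {C : NonemptyCompacts H}
    (hu : Tendsto u atTop (𝓝 C)) {v : ℕ → H} (hv : ∀ n, v n ∈ (u n : Set H))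
    {y : H} (hvy : Tendsto v atTop (𝓝 y)) : y ∈ (C : Set H) := by
  have hle : ∀ n, infDist y (C : Set H) ≤ dist y (v n) + dist (u n) C := by
    intro n
    calc infDist y (C : Set H) ≤ infDist (v n) (C : Set H) + dist y (v n) :=
          infDist_le_infDist_add_dist
      _ ≤ (infDist (v n) (u n : Set H)
            + hausdorffDist (u n : Set H) (C : Set H)) + dist y (v n) := by
          gcongr
          exact infDist_le_infDist_add_hausdorffDist (hausEdist_ne_top (u n) C)
      _ = dist y (v n) + dist (u n) C := by
          rw [infDist_zero_of_mem (hv n), zero_add, NonemptyCompacts.dist_eq, add_comm]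
  have hrhs : Tendsto (fun n => dist y (v n) + dist (u n) C) atTop (𝓝 0) := by
    have h1 : Tendsto (fun n => dist y (v n)) atTop (𝓝 0) := by
      have := tendsto_iff_dist_tendsto_zero.1 hvy
      simpa [dist_comm] using this
    have h2 := tendsto_iff_dist_tendsto_zero.1 hu
    simpa using h1.add h2
  have h0 : infDist y (C : Set H) ≤ 0 :=
    le_of_tendsto_of_tendsto tendsto_const_nhds hrhs (Eventually.of_forall hle)
  have : infDist y (C : Set H) = 0 := le_antisymm h0 infDist_nonneg
  exact (C.isCompact.isClosed.mem_iff_infDist_zero C.nonempty).2 this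

lemma dimLE_iff (C : Set H) (k : ℕ) :
    DimLE C k ↔ ∀ f : Fin (k + 2) → H, (∀ i, f i ∈ C) → ¬ AffineIndependent ℝ f := by
  constructor
  · intro h f hf hfi
    have hli := (affineIndependent_iff_linearIndependent_vsub ℝ f 0).1 hfi
    set g : {x : Fin (k + 2) // x ≠ 0} → (affineSpan ℝ C).direction := fun i =>
      ⟨f i -ᵥ f 0, AffineSubspace.vsub_mem_direction (mem_affineSpan ℝ (hf i))
        (mem_affineSpan ℝ (hf 0))⟩ with hg
    have hgli : LinearIndependent ℝ g := by
      apply LinearIndependent.of_comp ((affineSpan ℝ C).direction.subtype)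
      exact hli
    have hcard := hgli.cardinal_lift_le_rank
    have hmk : (Cardinal.mk {x : Fin (k + 2) // x ≠ 0}) = (k + 1 : ℕ) := by
      rw [Cardinal.mk_fintype]
      norm_num [Fintype.card_subtype_compl]
    rw [hmk] at hcard
    have hrank := h
    unfold DimLE at hrank
    have h3 := hcard.trans (Cardinal.lift_le.2 hrank)
    simp only [Cardinal.lift_natCast, Nat.cast_le] at h3
    omega
  · intro hall
    obtain ⟨t, hts, hspan, hind⟩ := exists_affineIndependent ℝ H C
    have hcard : Cardinal.mk t ≤ ((k + 1 : ℕ) : Cardinal) := by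
      by_contra hlt
      have h2 : ((k + 2 : ℕ) : Cardinal) ≤ Cardinal.mk t := by
        have h1 := not_le.1 hlt
        rw [show ((k + 2 : ℕ) : Cardinal) = Order.succ ((k + 1 : ℕ) : Cardinal) from
          Cardinal.nat_succ (k + 1)]
        exact Order.succ_le_of_lt h1
      have h3 : Nonempty (Fin (k + 2) ↪ ↑t) := by
        rw [← Cardinal.lift_mk_le']
        simpa using h2
      obtain ⟨e⟩ := h3
      exact hall (fun i => ↑(e i)) (fun i => hts (e i).2) (hind.comp_embedding e)
    have htfin : t.Finite := by
      rw [← Cardinal.lt_aleph0_iff_set_finite]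
      exact hcard.trans_lt (Cardinal.nat_lt_aleph0 _)
    unfold DimLE
    rw [← hspan, direction_affineSpan]
    rcases t.eq_empty_or_nonempty with rfl | ⟨p, hp⟩
    · rw [vectorSpan_empty, rank_bot]
      exact zero_le
    · rw [vectorSpan_eq_span_vsub_set_right_ne ℝ hp]
      refine le_trans (rank_span_le _) (le_trans Cardinal.mk_image_le ?_)
      have h1 : Cardinal.mk (t \ {p} : Set H) + 1 = Cardinal.mk t := by
        rw [← Cardinal.mk_singleton p]
        exact Cardinal.mk_diff_add_mk (by simpa using hp)
      obtain ⟨m, hm⟩ := Cardinal.lt_aleph0.1 ((htfin.diff (t := ({p} : Set H))).lt_aleph0)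
      rw [hm]
      rw [hm] at h1
      have : ((m + 1 : ℕ) : Cardinal) ≤ ((k + 1 : ℕ) : Cardinal) := by
        push_cast
        rw [h1]
        exact_mod_cast hcard
      rw [Nat.cast_le] at this
      exact_mod_cast Nat.lt_succ_iff.1 (Nat.lt_of_lt_of_le (Nat.lt_succ_self m) this)

lemma isOpen_affineIndep (n : ℕ) :
    IsOpen {f : Fin (n + 1) → H | AffineIndependent ℝ f} := by
  have h : {f : Fin (n + 1) → H | AffineIndependent ℝ f} =
      (fun (f : Fin (n + 1) → H) (i : {x : Fin (n + 1) // x ≠ 0}) => f i -ᵥ f 0) ⁻¹'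
        {g : {x : Fin (n + 1) // x ≠ 0} → H | LinearIndependent ℝ g} := by
    ext f
    exact affineIndependent_iff_linearIndependent_vsub ℝ f 0
  rw [h]
  refine isOpen_setOf_linearIndependent.preimage ?_
  exact continuous_pi fun i => ((continuous_apply (i : Fin (n+1))).sub (continuous_apply 0))

end Helpers

/-- Existence of a `(k, x₀)`-global principal convex component: the functional
`K_X(C) = ∫ d(x,C)² dP(x)` attains its minimum over `CC_{x₀,k}(X)`. -/
theorem exists_global_principal_convex_component
    {H : Type*} [NormedAddCommGroup H] [InnerProductSpace ℝ H] [CompleteSpace H]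
    [SecondCountableTopology H] [MeasurableSpace H] [BorelSpace H]
    (X : Set H) (hXc : IsCompact X) (hXconv : Convex ℝ X)
    (x₀ : H) (hx₀ : x₀ ∈ X) (k : ℕ) (hk : 1 ≤ k)
    (P : Measure H) (hP : IsProbabilityMeasure P) (hPX : P X = 1) :
    ∃ Cs : Set H, MemCC X x₀ k Cs ∧
      ∀ C : Set H, MemCC X x₀ k C →
        ∫ x, Metric.infDist x Cs ^ 2 ∂P ≤ ∫ x, Metric.infDist x C ^ 2 ∂P := by
  classical
  set R := diam X with hR
  have hR0 : 0 ≤ R := diam_nonneg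
  have hXm : MeasurableSet X := hXc.isClosed.measurableSet
  have haeX : ∀ᵐ x ∂P, x ∈ X := by
    have hc : P Xᶜ = 0 := by
      rw [measure_compl hXm (by simp [hPX])]
      simp [hPX]
    rw [ae_iff]
    exact hc
  -- pointwise bound
  have hptbd : ∀ (C : Set H), C.Nonempty → C ⊆ X → ∀ x ∈ X, infDist x C ≤ R := by
    intro C hne hCX x hx
    obtain ⟨c, hc⟩ := hne
    exact le_trans (infDist_le_dist_of_mem hc) (dist_le_diam_of_mem hXc.isBounded hx (hCX hc))
  have hint : ∀ (C : Set H), C.Nonempty → C ⊆ X →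
      Integrable (fun x => infDist x C ^ 2) P := by
    intro C hne hCX
    refine ⟨((continuous_infDist_pt C).pow 2).aestronglyMeasurable, ?_⟩
    refine HasFiniteIntegral.of_bounded (C := R ^ 2) ?_
    filter_upwards [haeX] with x hx
    rw [Real.norm_eq_abs, abs_of_nonneg (by positivity)]
    exact pow_le_pow_left₀ infDist_nonneg (hptbd C hne hCX x hx) 2
  set F : NonemptyCompacts H → ℝ := fun D => ∫ x, infDist x (D : Set H) ^ 2 ∂P with hF
  -- the one-sided Lipschitz estimate
  have hFle : ∀ D E : NonemptyCompacts H, (D : Set H) ⊆ X → (E : Set H) ⊆ X →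
      F D ≤ F E + 2 * R * dist D E := by
    intro D E hDX hEX
    have hpt : ∀ᵐ x ∂P, infDist x (D : Set H) ^ 2
        ≤ infDist x (E : Set H) ^ 2 + 2 * R * dist D E := by
      filter_upwards [haeX] with x hx
      have had : infDist x (D : Set H) ≤ infDist x (E : Set H)
          + hausdorffDist (E : Set H) (D : Set H) :=
        infDist_le_infDist_add_hausdorffDist (hausEdist_ne_top E D)
      have hdd : hausdorffDist (E : Set H) (D : Set H) = dist D E := by
        rw [NonemptyCompacts.dist_eq, hausdorffDist_comm]
      rw [hdd] at had
      have h1 : infDist x (D : Set H) ≤ R := hptbd _ D.nonempty hDX x hx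
      have h2 : infDist x (E : Set H) ≤ R := hptbd _ E.nonempty hEX x hx
      have h3 : (0:ℝ) ≤ infDist x (D : Set H) := infDist_nonneg
      have h4 : (0:ℝ) ≤ infDist x (E : Set H) := infDist_nonneg
      have h5 : (0:ℝ) ≤ dist D E := dist_nonneg
      nlinarith [mul_nonneg h5 (add_nonneg h3 h4)]
    calc F D ≤ ∫ x, (infDist x (E : Set H) ^ 2 + 2 * R * dist D E) ∂P :=
          integral_mono_ae (hint _ D.nonempty hDX)
            ((hint _ E.nonempty hEX).add (integrable_const _)) hpt
      _ = F E + 2 * R * dist D E := by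
          rw [integral_add (hint _ E.nonempty hEX) (integrable_const _)]
          simp [hF]
  set T : Set (NonemptyCompacts H) := {D | (D : Set H) ⊆ X} with hT
  have hFcont : ContinuousOn F T := by
    have : LipschitzOnWith (2 * R).toNNReal F T := by
      refine LipschitzOnWith.of_dist_le_mul fun D hD E hE => ?_
      rw [Real.dist_eq, Real.coe_toNNReal _ (by positivity), abs_le]
      constructor
      · have := hFle E D hE hD
        rw [dist_comm E D] at this
        linarith
      · have := hFle D E hD hE
        linarith
    exact this.continuousOn
  -- compactness of T
  haveI : CompactSpace X := isCompact_iff_compactSpace.mp hXc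
  let j : NonemptyCompacts X → NonemptyCompacts H := fun D =>
    ⟨⟨Subtype.val '' (D : Set X), D.isCompact.image continuous_subtype_val⟩,
      D.nonempty.image _⟩
  have hjiso : Isometry j := Isometry.of_dist_eq fun D E => by
    simp only [NonemptyCompacts.dist_eq]
    exact hausdorffDist_image isometry_subtype_coe
  have hrange : range j = T := by
    ext D
    constructor
    · rintro ⟨E, rfl⟩
      exact Subtype.coe_image_subset X (E : Set X)
    · intro hD
      obtain ⟨c, hc⟩ := D.nonempty
      refine ⟨⟨⟨Subtype.val ⁻¹' (D : Set H),
        (D.isCompact.isClosed.preimage continuous_subtype_val).isCompact⟩,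
        ⟨⟨c, hD hc⟩, hc⟩⟩, ?_⟩
      apply NonemptyCompacts.ext
      simp only [j, NonemptyCompacts.coe_mk, Compacts.coe_mk]
      change Subtype.val '' (Subtype.val ⁻¹' (D : Set H)) = (D : Set H)
      rw [Subtype.image_preimage_coe]
      exact inter_eq_self_of_subset_right hD
  have hTc : IsCompact T := by
    rw [← hrange]
    exact isCompact_range hjiso.continuous
  set S : Set (NonemptyCompacts H) := {D | (D : Set H) ⊆ X ∧ Convex ℝ (D : Set H)
      ∧ x₀ ∈ (D : Set H) ∧ DimLE (D : Set H) k} with hS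
  have hSsub : S ⊆ T := fun D hD => hD.1
  have hSc : IsClosed S := by
    refine IsSeqClosed.isClosed ?_
    intro u D hu htend
    refine ⟨?_, ?_, ?_, ?_⟩
    · intro y hy
      obtain ⟨v, hv, hvy⟩ := approx_seq htend hy
      exact hXc.isClosed.mem_of_tendsto hvy
        (Eventually.of_forall fun n => (hu n).1 (hv n))
    · intro a ha b hb ta tb hta htb hsum
      obtain ⟨va, hva, hvat⟩ := approx_seq htend ha
      obtain ⟨vb, hvb, hvbt⟩ := approx_seq htend hb
      exact mem_of_tendsto_of_mem htend
        (fun n => (hu n).2.1 (hva n) (hvb n) hta htb hsum)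
        ((hvat.const_smul ta).add (hvbt.const_smul tb))
    · exact mem_of_tendsto_of_mem htend (fun n => (hu n).2.2.1) tendsto_const_nhds
    · rw [dimLE_iff]
      intro f hf hfi
      choose v hv hvt using fun i => approx_seq htend (hf i)
      have htup : Tendsto (fun n => fun i => v i n) atTop (𝓝 f) :=
        tendsto_pi_nhds.2 fun i => hvt i
      have hev : ∀ᶠ n in atTop, AffineIndependent ℝ (fun i => v i n) :=
        htup.eventually ((isOpen_affineIndep (k + 1)).eventually_mem hfi)
      obtain ⟨n, hn⟩ := hev.exists
      exact (dimLE_iff _ k).1 (hu n).2.2.2 _ (fun i => hv i n) hn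
  have hScomp : IsCompact S := hTc.of_isClosed_subset hSc hSsub
  have hSne : S.Nonempty := by
    refine ⟨⟨⟨{x₀}, isCompact_singleton⟩, singleton_nonempty _⟩,
      by simpa using hx₀, convex_singleton x₀, mem_singleton _, ?_⟩
    unfold DimLE
    simp only [NonemptyCompacts.coe_mk, Compacts.coe_mk]
    change Module.rank ℝ (affineSpan ℝ ({x₀} : Set H)).direction ≤ (k : Cardinal)
    rw [direction_affineSpan, vectorSpan_singleton, rank_bot]
    exact zero_le
  obtain ⟨Cs, hCsS, hmin⟩ := hScomp.exists_isMinOn hSne (hFcont.mono hSsub)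
  refine ⟨(Cs : Set H), ⟨Cs.nonempty, Cs.isCompact.isClosed, hCsS.1, hCsS.2.1,
    hCsS.2.2.1, hCsS.2.2.2⟩, ?_⟩
  intro C hC
  have hCcomp : IsCompact C := hXc.of_isClosed_subset hC.2.1 hC.2.2.1
  have := hmin (show (⟨⟨C, hCcomp⟩, hC.1⟩ : NonemptyCompacts H) ∈ S from
    ⟨hC.2.2.1, hC.2.2.2.1, hC.2.2.2.2.1, hC.2.2.2.2.2⟩)
  exact this
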